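/- For every positive integer n, the Kirchhoff index of the linear crossed octagonal-quadrilateral network Q_n equals (32n^3 + 44n^2 + 17n + 2)/3. -/

import Mathlib

/-- The linear crossed octagonal-quadrilateral network `Q_n`.
Vertices are `(s, i)` with `s : Fin 2` (the layer, unprimed/primed) and
`i : Fin (4*n+1)` (the position, 0-indexed).  Vertices at consecutive
positions are adjacent (in the same layer and across layers, giving the
crossed edges), and vertices at the same position in different layers are
adjacent exactly at positions `i ≡ 0 (mod 4)` (vertices `4k+1` in the paper's
1-indexing) and `i ≡ 3 (mod 4)` (vertices `4k` in the paper's 1-indexing). -/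
def crossedOctQuad (n : ℕ) : SimpleGraph (Fin 2 × Fin (4 * n + 1)) where
  Adj p q := (p.2.val + 1 = q.2.val ∨ q.2.val + 1 = p.2.val) ∨
    (p.2 = q.2 ∧ p.1 ≠ q.1 ∧ (p.2.val % 4 = 0 ∨ p.2.val % 4 = 3))
  symm := by
    constructor
    rintro ⟨s, i⟩ ⟨t, j⟩ (h | ⟨h1, h2, h3⟩)
    · exact Or.inl h.symm
    · exact Or.inr ⟨h1.symm, h2.symm, h1 ▸ h3⟩
  loopless := by
    constructor
    rintro ⟨s, i⟩ (h | ⟨h1, h2, h3⟩)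
    · omega
    · exact h2 rfl

instance (n : ℕ) : DecidableRel (crossedOctQuad n).Adj := fun p q =>
  inferInstanceAs (Decidable ((p.2.val + 1 = q.2.val ∨ q.2.val + 1 = p.2.val) ∨
    (p.2 = q.2 ∧ p.1 ≠ q.1 ∧ (p.2.val % 4 = 0 ∨ p.2.val % 4 = 3))))



open Matrix

lemma diag_entry_eq (V : Type*) [Fintype V] [DecidableEq V] (A M : Matrix V V ℝ)
    (hA : A.IsHermitian) (j : V) :
    (star (hA.eigenvectorUnitary : Matrix V V ℝ) * M * (hA.eigenvectorUnitary : Matrix V V ℝ)) j j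
      = ⇑(hA.eigenvectorBasis j) ⬝ᵥ (M *ᵥ ⇑(hA.eigenvectorBasis j)) := by
  simp only [Matrix.mul_apply, Matrix.mulVec, dotProduct, Matrix.star_apply,
    Matrix.IsHermitian.eigenvectorUnitary_apply, star_trivial, Finset.sum_mul]
  rw [Finset.sum_comm]
  exact Finset.sum_congr rfl fun a _ => by
    rw [Finset.mul_sum]
    exact Finset.sum_congr rfl fun b _ => by ring

lemma sum_inv_eig {V : Type*} [Fintype V] [DecidableEq V] [Nonempty V] (G : SimpleGraph V)
    [DecidableRel G.Adj] (hG : G.Preconnected) (h : (G.lapMatrix ℝ).IsHermitian)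
    (M : Matrix V V ℝ)
    (hML : M * G.lapMatrix ℝ = 1 - ((Fintype.card V : ℝ))⁻¹ • Matrix.of (fun _ _ => (1:ℝ)))
    (hM1 : M *ᵥ (fun _ => (1:ℝ)) = 0) :
    ∑ i, (h.eigenvalues i)⁻¹ = Matrix.trace M := by
  classical
  have hUu : (h.eigenvectorUnitary : Matrix V V ℝ) * star (h.eigenvectorUnitary : Matrix V V ℝ) = 1 :=
    (Matrix.mem_unitaryGroup_iff).mp h.eigenvectorUnitary.2
  have htr : Matrix.trace M
      = Matrix.trace (star (h.eigenvectorUnitary : Matrix V V ℝ) * M * (h.eigenvectorUnitary : Matrix V V ℝ)) := by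
    rw [Matrix.trace_mul_cycle, hUu, Matrix.one_mul]
  rw [htr, Matrix.trace]
  refine Finset.sum_congr rfl fun j _ => ?_
  rw [Matrix.diag_apply, diag_entry_eq V _ M h j]
  set u : V → ℝ := ⇑(h.eigenvectorBasis j) with hu
  have hnorm : u ⬝ᵥ u = 1 := by
    have h1 := h.eigenvectorBasis.orthonormal.1 j
    have h2 : (inner ℝ (h.eigenvectorBasis j) (h.eigenvectorBasis j) : ℝ) = 1 := by
      rw [real_inner_self_eq_norm_mul_norm, h1, mul_one]
    rw [EuclideanSpace.inner_eq_star_dotProduct] at h2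
    simpa using h2
  have heig : G.lapMatrix ℝ *ᵥ u = h.eigenvalues j • u := h.mulVec_eigenvectorBasis j
  by_cases hl : h.eigenvalues j = 0
  · have hz : G.lapMatrix ℝ *ᵥ u = 0 := by rw [heig, hl, zero_smul]
    have hconst : ∀ a b : V, u a = u b := by
      intro a b
      refine (G.lapMatrix_mulVec_eq_zero_iff_forall_reachable).mp ?_ a b (hG a b)
      exact hz
    obtain ⟨a0⟩ := ‹Nonempty V›
    have hueq : u = fun _ => u a0 • (1:ℝ) := by funext b; simp [hconst b a0]
    have hz2 : M *ᵥ u = 0 := by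
      rw [hueq]
      have : (fun _ : V => u a0 • (1:ℝ)) = u a0 • (fun _ : V => (1:ℝ)) := rfl
      rw [this, Matrix.mulVec_smul, hM1, smul_zero]
    rw [hz2, hl, _root_.inv_zero, dotProduct_zero]
  · have hsum : ∑ x : V, u x = 0 := by
      have h0 : G.lapMatrix ℝ *ᵥ (fun _ => (1:ℝ)) = 0 := G.lapMatrix_mulVec_const_eq_zero
      have hsymm : (G.lapMatrix ℝ)ᵀ = G.lapMatrix ℝ := G.isSymm_lapMatrix (R := ℝ)
      have hd : (fun _ : V => (1:ℝ)) ⬝ᵥ (G.lapMatrix ℝ *ᵥ u) = 0 := by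
        rw [dotProduct_mulVec, ← Matrix.mulVec_transpose, hsymm, h0, zero_dotProduct]
      rw [heig, dotProduct_smul, smul_eq_mul] at hd
      have := (mul_eq_zero.mp hd).resolve_left hl
      simpa [dotProduct] using this
    have hML' : (h.eigenvalues j) • (M *ᵥ u) = u := by
      rw [← Matrix.mulVec_smul, ← heig, Matrix.mulVec_mulVec, hML,
        Matrix.sub_mulVec, Matrix.one_mulVec, Matrix.smul_mulVec]
      have hJ : (Matrix.of (fun _ _ : V => (1:ℝ))) *ᵥ u = 0 := by
        funext a; simpa [Matrix.mulVec, dotProduct] using hsum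
      rw [hJ, smul_zero, sub_zero]
    have hMu : M *ᵥ u = (h.eigenvalues j)⁻¹ • u := by
      have h3 : (h.eigenvalues j)⁻¹ • ((h.eigenvalues j) • (M *ᵥ u))
          = (h.eigenvalues j)⁻¹ • u := by rw [hML']
      rwa [smul_smul, inv_mul_cancel₀ hl, one_smul] at h3
    rw [hMu, dotProduct_smul, hnorm, smul_eq_mul, mul_one]


def Tz (m i j : ℤ) : ℤ :=
  3*i^2 + 3*j^2 - 3*(m-1)*(i+j) - 3*m*|i-j| + 2*m^2 - 3*m + 1

lemma Tz_symm (m i j : ℤ) : Tz m i j = Tz m j i := by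
  simp only [Tz, abs_sub_comm]; ring

lemma I1 (m i j : ℤ) : 2*Tz m i j - Tz m i (j-1) - Tz m i (j+1)
    = (if i = j then 6*m else 0) - 6 := by
  rcases lt_trichotomy i j with hc | hc | hc
  · have h1 : |i - j| = j - i := by rw [abs_of_nonpos (by omega)]; ring
    have h2 : |i - (j-1)| = j - 1 - i := by rw [abs_of_nonpos (by omega)]; ring
    have h3 : |i - (j+1)| = j + 1 - i := by rw [abs_of_nonpos (by omega)]; ring
    rw [if_neg (by omega)]; simp only [Tz, h1, h2, h3]; ring
  · subst hc
    have h1 : |i - i| = 0 := by simp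
    have h2 : |i - (i-1)| = 1 := by rw [show i - (i-1) = 1 by ring]; simp
    have h3 : |i - (i+1)| = 1 := by rw [show i - (i+1) = -1 by ring]; simp
    rw [if_pos rfl]; simp only [Tz, h1, h2, h3]; ring
  · have h1 : |i - j| = i - j := by rw [abs_of_nonneg (by omega)]
    have h2 : |i - (j-1)| = i - j + 1 := by rw [abs_of_nonneg (by omega)]; ring
    have h3 : |i - (j+1)| = i - j - 1 := by rw [abs_of_nonneg (by omega)]; ring
    rw [if_neg (by omega)]; simp only [Tz, h1, h2, h3]; ring

lemma I2 (m i : ℤ) (hi : 0 ≤ i) : Tz m i 0 - Tz m i 1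
    = (if i = 0 then 6*m else 0) - 6 := by
  rcases eq_or_lt_of_le hi with hc | hc
  · have h1 : |i - 0| = -i + 0 := by rw [abs_of_nonpos (by omega)]; ring
    have h2 : |i - 1| = 1 - i := by rw [abs_of_nonpos (by omega)]; ring
    rw [if_pos hc.symm]; simp only [Tz, h1, h2]; rw [← hc]; ring
  · have h1 : |i - 0| = i - 0 := by rw [abs_of_nonneg (by omega)]
    have h2 : |i - 1| = i - 1 := by rw [abs_of_nonneg (by omega)]
    rw [if_neg (by omega)]; simp only [Tz, h1, h2]; ring

lemma I3 (m i : ℤ) (hi : i ≤ m - 1) : Tz m i (m-1) - Tz m i (m-2)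
    = (if i = m - 1 then 6*m else 0) - 6 := by
  rcases eq_or_lt_of_le hi with hc | hc
  · have h1 : |i - (m-1)| = 0 := by rw [hc]; simp
    have h2 : |i - (m-2)| = 1 := by rw [hc, show m - 1 - (m-2) = 1 by ring]; simp
    rw [if_pos hc]; simp only [Tz, h1, h2]; rw [hc]; ring
  · have h1 : |i - (m-1)| = m - 1 - i := by rw [abs_of_nonpos (by omega)]; ring
    have h2 : |i - (m-2)| = m - 2 - i := by rw [abs_of_nonpos (by omega)]; ring
    rw [if_neg (by omega)]; simp only [Tz, h1, h2]; ring

lemma sumid (m : ℕ) : (∑ j ∈ Finset.range m, (j:ℤ)) * 2 = m*(m-1) := by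
  induction m with
  | zero => simp
  | succ k ih => rw [Finset.sum_range_succ, add_mul, ih]; push_cast; ring

lemma sumsq (m : ℕ) : (∑ j ∈ Finset.range m, (j:ℤ)^2) * 6 = m*(m-1)*(2*m-1) := by
  induction m with
  | zero => simp
  | succ k ih => rw [Finset.sum_range_succ, add_mul, ih]; push_cast; ring

lemma sumabs (i : ℕ) : ∀ m : ℕ, i < m →
    (∑ j ∈ Finset.range m, |(i:ℤ) - j|) * 2 = i*(i+1) + ((m:ℤ)-1-i)*((m:ℤ)-i) := by
  refine Nat.le_induction ?_ ?_
  · rw [show Finset.range (i+1) = Finset.range (i+1) from rfl]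
    have : ∀ j ∈ Finset.range (i+1), |(i:ℤ) - j| = (i:ℤ) - j := by
      intro j hj; rw [abs_of_nonneg]; have := Finset.mem_range.mp hj; omega
    rw [Finset.sum_congr rfl this, Finset.sum_sub_distrib, Finset.sum_const,
      Finset.card_range, sub_mul, Finset.sum_range_succ]
    have := sumid i
    simp only [nsmul_eq_mul]
    push_cast
    linarith
  · intro m hm ih
    rw [Finset.sum_range_succ, add_mul, ih]
    have : |(i:ℤ) - m| = (m:ℤ) - i := by rw [abs_of_nonpos (by push_cast; omega)]; ring
    rw [this]; push_cast; ring

lemma rowsum (m i : ℕ) (h : i < m) : ∑ j ∈ Finset.range m, Tz m i j = 0 := by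
  have e1 := sumid m
  have e2 := sumsq m
  have e3 := sumabs i m h
  have expand : ∑ j ∈ Finset.range m, Tz m i j
      = (m:ℤ)*(3*(i:ℤ)^2 - 3*((m:ℤ)-1)*i + 2*(m:ℤ)^2 - 3*m + 1)
        + 3*(∑ j ∈ Finset.range m, (j:ℤ)^2)
        - 3*((m:ℤ)-1)*(∑ j ∈ Finset.range m, (j:ℤ))
        - 3*(m:ℤ)*(∑ j ∈ Finset.range m, |(i:ℤ)-j|) := by
    rw [Finset.mul_sum, Finset.mul_sum, Finset.mul_sum,
      show (m:ℤ)*(3*(i:ℤ)^2 - 3*((m:ℤ)-1)*i + 2*(m:ℤ)^2 - 3*m + 1)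
        = ∑ _j ∈ Finset.range m, (3*(i:ℤ)^2 - 3*((m:ℤ)-1)*i + 2*(m:ℤ)^2 - 3*m + 1) from by
          rw [Finset.sum_const, Finset.card_range, nsmul_eq_mul]]
    rw [← Finset.sum_add_distrib, ← Finset.sum_sub_distrib, ← Finset.sum_sub_distrib]
    exact Finset.sum_congr rfl fun j _ => by simp only [Tz]; ring
  have h2 : (∑ j ∈ Finset.range m, Tz m i j) * 2 = 0 := by
    rw [expand]
    linear_combination e2 - 3*((m:ℤ)-1)*e1 - 3*(m:ℤ)*e3
  omega

lemma tracesum (m : ℕ) : ∑ i ∈ Finset.range m, Tz m i i = m*((m:ℤ)^2-1) := by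
  have e1 := sumid m
  have e2 := sumsq m
  have expand : ∑ i ∈ Finset.range m, Tz m i i
      = 6*(∑ i ∈ Finset.range m, (i:ℤ)^2)
        - 6*((m:ℤ)-1)*(∑ i ∈ Finset.range m, (i:ℤ))
        + (m:ℤ)*(2*(m:ℤ)^2 - 3*m + 1) := by
    rw [Finset.mul_sum, Finset.mul_sum,
      show (m:ℤ)*(2*(m:ℤ)^2 - 3*m + 1) = ∑ _i ∈ Finset.range m, (2*(m:ℤ)^2 - 3*m + 1) from by
        rw [Finset.sum_const, Finset.card_range, nsmul_eq_mul]]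
    rw [← Finset.sum_sub_distrib, ← Finset.sum_add_distrib]
    refine Finset.sum_congr rfl fun i _ => ?_
    simp only [Tz, sub_self, abs_zero]; ring
  rw [expand]
  linear_combination e2 - 3*((m:ℤ)-1)*e1

/-- The scaled pseudoinverse core function. -/
noncomputable def Tr (n : ℕ) (i j : ℕ) : ℝ := ((Tz (4*n+1 : ℕ) i j : ℤ) : ℝ)

noncomputable def wd (n : ℕ) (i : ℕ) : ℝ :=
  (4*(n:ℝ)+1) * (if i = 0 ∨ i = 4*n then 3 else if i % 4 = 0 ∨ i % 4 = 3 then 2 else 3)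

noncomputable def ee (s t : Fin 2) : ℝ := if s = t then 1 else -1

noncomputable def W (n : ℕ) : Matrix (Fin 2 × Fin (4*n+1)) (Fin 2 × Fin (4*n+1)) ℝ :=
  fun p q => Tr n p.2 q.2 + ee p.1 q.1 * (if p.2 = q.2 then wd n q.2 else 0)

lemma precon (n : ℕ) : (crossedOctQuad n).Preconnected := by
  have hstep : ∀ (k : ℕ) (hk : k+1 < 4*n+1) (u v : Fin 2),
      (crossedOctQuad n).Adj (u, ⟨k, by omega⟩) (v, ⟨k+1, hk⟩) := fun k hk u v =>
    Or.inl (Or.inl rfl)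
  have hreach : ∀ (k : ℕ) (hk : k < 4*n+1) (u : Fin 2),
      (crossedOctQuad n).Reachable (0, ⟨0, by omega⟩) (u, ⟨k, hk⟩) := by
    intro k
    induction k with
    | zero =>
      intro hk u
      have hadj : (crossedOctQuad n).Adj (0, ⟨0, hk⟩) (1, ⟨0, hk⟩) :=
        Or.inr ⟨rfl, by exact Fin.zero_ne_one, Or.inl rfl⟩
      fin_cases u
      · exact SimpleGraph.Reachable.refl _
      · exact SimpleGraph.Adj.reachable hadj
    | succ k ih =>
      intro hk u
      exact ((ih (by omega) 0)).trans (SimpleGraph.Adj.reachable (hstep k hk 0 u))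
  rintro ⟨u, i⟩ ⟨v, j⟩
  have h1 := hreach i.val i.isLt u
  have h2 := hreach j.val j.isLt v
  simp only [Fin.eta] at h1 h2
  exact h1.symm.trans h2

lemma sum_fin_eq {m : ℕ} (a : ℕ) (f : Fin m → ℝ) :
    ∑ k : Fin m, (if a = (k:ℕ) then f k else 0) = if h : a < m then f ⟨a, h⟩ else 0 := by
  split
  · next h =>
    rw [Finset.sum_eq_single (⟨a, h⟩ : Fin m)]
    · rw [if_pos rfl]
    · intro b _ hb
      rw [if_neg]
      intro hab
      exact hb (by ext; simp; omega)
    · intro hb; exact absurd (Finset.mem_univ _) hb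
  · next h =>
    refine Finset.sum_eq_zero fun k _ => ?_
    rw [if_neg]
    have := k.isLt
    omega

lemma sum_fin_succ {m : ℕ} (a : ℕ) (f : Fin m → ℝ) :
    ∑ k : Fin m, (if (k:ℕ)+1 = a then f k else 0)
      = if h : 0 < a ∧ a ≤ m then f ⟨a-1, by omega⟩ else 0 := by
  split
  · next h =>
    rw [Finset.sum_eq_single (⟨a-1, by omega⟩ : Fin m)]
    · rw [if_pos (by simp; omega)]
    · intro b _ hb
      rw [if_neg]
      intro hab
      exact hb (by ext; simp; omega)
    · intro hb; exact absurd (Finset.mem_univ _) hb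
  · next h =>
    refine Finset.sum_eq_zero fun k _ => ?_
    rw [if_neg]
    have := k.isLt
    omega

lemma third_sum (C : Prop) [Decidable C] (g : Fin 2 → ℝ) (t : Fin 2) :
    (if t ≠ 0 ∧ C then g 0 else 0) + (if t ≠ 1 ∧ C then g 1 else 0)
      = if C then g (1-t) else 0 := by
  fin_cases t <;> by_cases hC : C <;> simp [hC]

lemma adjSum (n : ℕ) (f : Fin 2 × Fin (4*n+1) → ℝ) (t : Fin 2) (j : Fin (4*n+1)) :
    ∑ r : Fin 2 × Fin (4*n+1), (if (crossedOctQuad n).Adj (t,j) r then f r else 0)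
    = (if h : (j:ℕ)+1 < 4*n+1 then f (0, ⟨(j:ℕ)+1, h⟩) + f (1, ⟨(j:ℕ)+1, h⟩) else 0)
      + (if h : 0 < (j:ℕ) then
          f (0, ⟨(j:ℕ)-1, by omega⟩) + f (1, ⟨(j:ℕ)-1, by omega⟩) else 0)
      + (if (j:ℕ)%4 = 0 ∨ (j:ℕ)%4 = 3 then f (1-t, j) else 0) := by
  rw [Fintype.sum_prod_type]
  have key : ∀ u : Fin 2, ∀ k : Fin (4*n+1),
      (if (crossedOctQuad n).Adj (t,j) (u,k) then f (u,k) else 0)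
      = (if (j:ℕ)+1 = (k:ℕ) then f (u,k) else 0)
        + (if (k:ℕ)+1 = (j:ℕ) then f (u,k) else 0)
        + (if j = k then (if t ≠ u ∧ ((j:ℕ)%4 = 0 ∨ (j:ℕ)%4 = 3) then f (u,k) else 0)
            else 0) := by
    intro u k
    show (if (((j:ℕ)+1 = (k:ℕ) ∨ (k:ℕ)+1 = (j:ℕ)) ∨
        (j = k ∧ t ≠ u ∧ ((j:ℕ)%4 = 0 ∨ (j:ℕ)%4 = 3))) then f (u,k) else 0) = _
    by_cases h1 : (j:ℕ)+1 = (k:ℕ) <;> by_cases h2 : (k:ℕ)+1 = (j:ℕ) <;>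
      by_cases h3 : j = k <;>
      by_cases h4 : t ≠ u ∧ ((j:ℕ)%4 = 0 ∨ (j:ℕ)%4 = 3) <;>
      simp only [Fin.ext_iff] at h3 ⊢ <;>
      split_ifs <;> simp_all <;> omega
  simp only [key]
  rw [Fin.sum_univ_two]
  rw [Finset.sum_add_distrib, Finset.sum_add_distrib, Finset.sum_add_distrib,
    Finset.sum_add_distrib]
  rw [sum_fin_eq, sum_fin_eq, sum_fin_succ, sum_fin_succ,
    Finset.sum_ite_eq, Finset.sum_ite_eq]
  simp only [Finset.mem_univ, if_true]
  have hj : (j:ℕ) < 4*n+1 := j.isLt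
  rw [show ∀ a b c d e g : ℝ, a + c + e + (b + d + g) = (a + b) + (c + d) + (e + g) from
    fun a b c d e g => by ring]
  rw [third_sum _ (fun u => f (u, j)) t]
  split_ifs <;> (first | ring1 | (exfalso; omega))

lemma claimA (n i j : ℕ) (hn : 0 < n) (hi : i < 4*n+1) (hj : j < 4*n+1) :
    ((if j+1 < 4*n+1 then (1:ℝ) else 0) + (if 0 < j then 1 else 0)) * Tr n i j
      - (if j+1 < 4*n+1 then Tr n i (j+1) else 0)
      - (if 0 < j then Tr n i (j-1) else 0)
    = (if i = j then 6*(4*(n:ℝ)+1) else 0) - 6 := by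
  by_cases h0 : 0 < j <;> by_cases h1 : j + 1 < 4*n+1
  · -- interior
    have key := I1 ((4*n+1 : ℕ) : ℤ) (i : ℤ) (j : ℤ)
    simp only [if_pos h0, if_pos h1]
    have e1 : ((j - 1 : ℕ) : ℤ) = (j : ℤ) - 1 := by omega
    have e2 : ((j + 1 : ℕ) : ℤ) = (j : ℤ) + 1 := by push_cast; ring
    by_cases hij : i = j
    · rw [if_pos (show (i:ℤ) = (j:ℤ) by exact_mod_cast hij)] at key
      have keyR := congrArg (fun z : ℤ => (z : ℝ)) key
      push_cast at keyR
      rw [if_pos hij]; unfold Tr; rw [e1, e2]; push_cast; linarith [keyR]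
    · rw [if_neg (show ¬((i:ℤ) = (j:ℤ)) from fun h => hij (by exact_mod_cast h))] at key
      have keyR := congrArg (fun z : ℤ => (z : ℝ)) key
      push_cast at keyR
      rw [if_neg hij]; unfold Tr; rw [e1, e2]; push_cast; linarith [keyR]
  · -- j = 4n
    have key := I3 ((4*n+1 : ℕ) : ℤ) (i : ℤ) (by push_cast; omega)
    simp only [if_pos h0, if_neg h1]
    have e1 : ((j - 1 : ℕ) : ℤ) = ((4*n+1 : ℕ) : ℤ) - 2 := by omega
    have e2 : ((j : ℕ) : ℤ) = ((4*n+1 : ℕ) : ℤ) - 1 := by omega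
    rw [← e1, ← e2] at key
    by_cases hij : i = j
    · rw [if_pos (show (i:ℤ) = ((j:ℕ):ℤ) by exact_mod_cast hij)] at key
      have keyR := congrArg (fun z : ℤ => (z : ℝ)) key
      push_cast at keyR
      rw [if_pos hij]; unfold Tr; push_cast; linarith [keyR]
    · rw [if_neg (show ¬((i:ℤ) = ((j:ℕ):ℤ)) from fun h => hij (by exact_mod_cast h))] at key
      have keyR := congrArg (fun z : ℤ => (z : ℝ)) key
      push_cast at keyR
      rw [if_neg hij]; unfold Tr; push_cast; linarith [keyR]
  · -- j = 0
    have hj0 : j = 0 := by omega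
    subst hj0
    have key := I2 ((4*n+1 : ℕ) : ℤ) (i : ℤ) (by positivity)
    simp only [if_pos h1, if_neg h0]
    by_cases hij : i = 0
    · rw [if_pos (show (i:ℤ) = 0 by exact_mod_cast hij)] at key
      have keyR := congrArg (fun z : ℤ => (z : ℝ)) key
      push_cast at keyR
      rw [if_pos hij]; unfold Tr; push_cast; linarith [keyR]
    · rw [if_neg (show ¬((i:ℤ) = 0) from fun h => hij (by exact_mod_cast h))] at key
      have keyR := congrArg (fun z : ℤ => (z : ℝ)) key
      push_cast at keyR
      rw [if_neg hij]; unfold Tr; push_cast; linarith [keyR]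
  · omega

lemma degR (n : ℕ) (t : Fin 2) (j : Fin (4*n+1)) :
    (((crossedOctQuad n).degree (t,j)) : ℝ)
      = (if (j:ℕ)+1 < 4*n+1 then 2 else 0) + (if 0 < (j:ℕ) then 2 else 0)
        + (if (j:ℕ)%4 = 0 ∨ (j:ℕ)%4 = 3 then 1 else 0) := by
  rw [SimpleGraph.degree_eq_sum_if_adj (G := crossedOctQuad n) (R := ℝ)]
  rw [adjSum n (fun _ => (1:ℝ)) t j]
  split_ifs <;> norm_num

lemma pairW (n : ℕ) (s : Fin 2) (i : Fin (4*n+1)) (k : Fin (4*n+1)) :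
    W n (s,i) (0,k) + W n (s,i) (1,k) = 2 * Tr n i k := by
  fin_cases s <;> by_cases hik : i = k <;> simp [W, ee, hik] <;> ring

lemma crossW (n : ℕ) (s t : Fin 2) (i j : Fin (4*n+1)) :
    W n (s,i) (1-t,j) = Tr n i j - ee s t * (if i = j then wd n j else 0) := by
  fin_cases s <;> fin_cases t <;> by_cases hik : i = j <;> simp [W, ee, hik] <;> ring

lemma WL_entry (n : ℕ) (hn : 0 < n) (p q : Fin 2 × Fin (4*n+1)) :
    (W n * (crossedOctQuad n).lapMatrix ℝ) p q
      = 24*(4*(n:ℝ)+1) * (if p = q then 1 else 0) - 12 := by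
  obtain ⟨s, i⟩ := p
  obtain ⟨t, j⟩ := q
  rw [Matrix.mul_apply]
  have hterm : ∀ r, W n (s,i) r * (crossedOctQuad n).lapMatrix ℝ r (t,j)
      = (if r = (t,j) then W n (s,i) r * (((crossedOctQuad n).degree r : ℕ) : ℝ) else 0)
        - (if (crossedOctQuad n).Adj (t,j) r then W n (s,i) r else 0) := by
    intro r
    rw [SimpleGraph.lapMatrix, Matrix.sub_apply, SimpleGraph.degMatrix,
      Matrix.diagonal_apply, SimpleGraph.adjMatrix_apply,
      if_congr ((crossedOctQuad n).adj_comm r (t,j)) rfl rfl]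
    split_ifs <;> ring
  rw [Finset.sum_congr rfl fun r _ => hterm r, Finset.sum_sub_distrib,
    Finset.sum_ite_eq' Finset.univ ((t,j) : Fin 2 × Fin (4*n+1))
      (fun r => W n (s,i) r * (((crossedOctQuad n).degree r : ℕ) : ℝ)),
    adjSum n (fun r => W n (s,i) r) t j]
  simp only [Finset.mem_univ, if_true]
  rw [degR n t j]
  have e1 : (if h : (j:ℕ)+1 < 4*n+1 then W n (s,i) (0,⟨(j:ℕ)+1,h⟩) + W n (s,i) (1,⟨(j:ℕ)+1,h⟩) else 0)
      = 2 * (if (j:ℕ)+1 < 4*n+1 then Tr n i ((j:ℕ)+1) else 0) := by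
    split_ifs with h
    · simpa using pairW n s i ⟨(j:ℕ)+1, h⟩
    · norm_num
  have e2 : (if h : 0 < (j:ℕ) then W n (s,i) (0,⟨(j:ℕ)-1, by omega⟩) + W n (s,i) (1,⟨(j:ℕ)-1, by omega⟩) else 0)
      = 2 * (if 0 < (j:ℕ) then Tr n i ((j:ℕ)-1) else 0) := by
    split_ifs with h
    · simpa using pairW n s i ⟨(j:ℕ)-1, by omega⟩
    · norm_num
  rw [e1, e2, crossW n s t i j]
  have key := claimA n i j hn i.isLt j.isLt
  have hij_iff : (i = j) ↔ ((i:ℕ) = (j:ℕ)) := (Fin.val_eq_val i j).symm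
  have hpq : ((s,i) = (t,j)) ↔ (s = t ∧ i = j) := Prod.ext_iff
  have hjcase : (j:ℕ) = 0 ∨ (j:ℕ) = 4*n ∨ (0 < (j:ℕ) ∧ (j:ℕ)+1 < 4*n+1) := by
    have := j.isLt; omega
  have main : ∀ (cross : ℝ), cross = (if (j:ℕ)%4 = 0 ∨ (j:ℕ)%4 = 3 then
        Tr n i j - ee s t * (if i = j then wd n j else 0) else 0) →
      W n (s,i) (t,j) * ((if (j:ℕ)+1 < 4*n+1 then (2:ℝ) else 0) + (if 0 < (j:ℕ) then 2 else 0)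
        + (if (j:ℕ)%4 = 0 ∨ (j:ℕ)%4 = 3 then 1 else 0))
      - (2 * (if (j:ℕ)+1 < 4*n+1 then Tr n i ((j:ℕ)+1) else 0)
          + 2 * (if 0 < (j:ℕ) then Tr n i ((j:ℕ)-1) else 0) + cross)
      = 24*(4*(n:ℝ)+1) * (if (s,i) = (t,j) then 1 else 0) - 12 := by
    intro cross hcross
    rcases hjcase with hj0 | hj4 | ⟨h0, h1⟩
    · -- j = 0
      have c1 : (j:ℕ)+1 < 4*n+1 := by omega
      have c0 : ¬ 0 < (j:ℕ) := by omega
      have hcc : (j:ℕ)%4 = 0 ∨ (j:ℕ)%4 = 3 := Or.inl (by omega)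
      have hwd : wd n (j:ℕ) = 3*(4*(n:ℝ)+1) := by
        unfold wd; rw [if_pos (Or.inl hj0)]; ring
      rw [if_pos hcc] at hcross
      subst hcross
      rw [if_pos c1, if_neg c0] at key
      rw [if_pos c1, if_neg c0, if_pos hcc]
      by_cases hij : i = j
      · rw [if_pos (hij_iff.mp hij)] at key
        by_cases hst : s = t
        · rw [if_pos (hpq.mpr ⟨hst, hij⟩)]
          simp only [W, if_pos hij, ee, if_pos hst, hwd]
          linarith [key]
        · rw [if_neg (fun h => hst (hpq.mp h).1)]
          simp only [W, if_pos hij, ee, if_neg hst, hwd]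
          linarith [key]
      · rw [if_neg (fun h => (hij (hij_iff.mpr h)))] at key
        rw [if_neg (fun h => hij (hpq.mp h).2)]
        simp only [W, if_neg hij]
        linarith [key]
    · -- j = 4n
      have c1 : ¬ ((j:ℕ)+1 < 4*n+1) := by omega
      have c0 : 0 < (j:ℕ) := by omega
      have hcc : (j:ℕ)%4 = 0 ∨ (j:ℕ)%4 = 3 := Or.inl (by omega)
      have hwd : wd n (j:ℕ) = 3*(4*(n:ℝ)+1) := by
        unfold wd; rw [if_pos (Or.inr hj4)]; ring
      rw [if_pos hcc] at hcross
      subst hcross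
      rw [if_neg c1, if_pos c0] at key
      rw [if_neg c1, if_pos c0, if_pos hcc]
      by_cases hij : i = j
      · rw [if_pos (hij_iff.mp hij)] at key
        by_cases hst : s = t
        · rw [if_pos (hpq.mpr ⟨hst, hij⟩)]
          simp only [W, if_pos hij, ee, if_pos hst, hwd]
          linarith [key]
        · rw [if_neg (fun h => hst (hpq.mp h).1)]
          simp only [W, if_pos hij, ee, if_neg hst, hwd]
          linarith [key]
      · rw [if_neg (fun h => (hij (hij_iff.mpr h)))] at key
        rw [if_neg (fun h => hij (hpq.mp h).2)]
        simp only [W, if_neg hij]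
        linarith [key]
    · -- interior
      rw [if_pos h1, if_pos h0] at key
      rw [if_pos h1, if_pos h0]
      by_cases hcc : (j:ℕ)%4 = 0 ∨ (j:ℕ)%4 = 3
      · have hwd : wd n (j:ℕ) = 2*(4*(n:ℝ)+1) := by
          unfold wd; rw [if_neg (by omega), if_pos hcc]; ring
        rw [if_pos hcc] at hcross
        subst hcross
        rw [if_pos hcc]
        by_cases hij : i = j
        · rw [if_pos (hij_iff.mp hij)] at key
          by_cases hst : s = t
          · rw [if_pos (hpq.mpr ⟨hst, hij⟩)]
            simp only [W, if_pos hij, ee, if_pos hst, hwd]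
            linarith [key]
          · rw [if_neg (fun h => hst (hpq.mp h).1)]
            simp only [W, if_pos hij, ee, if_neg hst, hwd]
            linarith [key]
        · rw [if_neg (fun h => (hij (hij_iff.mpr h)))] at key
          rw [if_neg (fun h => hij (hpq.mp h).2)]
          simp only [W, if_neg hij]
          linarith [key]
      · have hwd : wd n (j:ℕ) = 3*(4*(n:ℝ)+1) := by
          unfold wd; rw [if_neg (by omega), if_neg hcc]; ring
        rw [if_neg hcc] at hcross
        subst hcross
        rw [if_neg hcc]
        by_cases hij : i = j
        · rw [if_pos (hij_iff.mp hij)] at key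
          by_cases hst : s = t
          · rw [if_pos (hpq.mpr ⟨hst, hij⟩)]
            simp only [W, if_pos hij, ee, if_pos hst, hwd]
            linarith [key]
          · rw [if_neg (fun h => hst (hpq.mp h).1)]
            simp only [W, if_pos hij, ee, if_neg hst, hwd]
            linarith [key]
        · rw [if_neg (fun h => (hij (hij_iff.mpr h)))] at key
          rw [if_neg (fun h => hij (hpq.mp h).2)]
          simp only [W, if_neg hij]
          linarith [key]
  exact main _ rfl

lemma rowsumR (n : ℕ) (i : ℕ) (hi : i < 4*n+1) :
    ∑ k : Fin (4*n+1), Tr n i k = 0 := by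
  have h1 : ∑ k : Fin (4*n+1), Tr n i k
      = ∑ k ∈ Finset.range (4*n+1), Tr n i k :=
    Fin.sum_univ_eq_sum_range (fun k => Tr n i k) (4*n+1)
  have h2 := rowsum (4*n+1) i hi
  have h3 := congrArg (fun z : ℤ => (z : ℝ)) h2
  push_cast at h3
  rw [h1]
  unfold Tr
  rw [← h3]
  push_cast
  rfl

open Matrix in
lemma Wrow (n : ℕ) : W n *ᵥ (fun _ => (1:ℝ)) = 0 := by
  funext p
  obtain ⟨s, i⟩ := p
  show ∑ r : Fin 2 × Fin (4*n+1), W n (s,i) r * 1 = 0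
  rw [Fintype.sum_prod_type, Fin.sum_univ_two, ← Finset.sum_add_distrib]
  have : ∀ k : Fin (4*n+1), W n (s,i) (0,k) * 1 + W n (s,i) (1,k) * 1
      = 2 * Tr n i k := by
    intro k; rw [mul_one, mul_one]; exact pairW n s i k
  rw [Finset.sum_congr rfl fun k _ => this k, ← Finset.mul_sum,
    rowsumR n i i.isLt, mul_zero]

lemma usum : ∀ m : ℕ, 1 ≤ m →
    ∑ i ∈ Finset.range (4*m-1), (if (i+1)%4 = 0 ∨ (i+1)%4 = 3 then (2:ℝ) else 3)
      = 10*m - 2 := by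
  refine Nat.le_induction ?_ ?_
  · norm_num [Finset.sum_range_succ]
  · intro m hm ih
    rw [show 4*(m+1)-1 = 4*m-1+1+1+1+1 by omega]
    rw [Finset.sum_range_succ, Finset.sum_range_succ, Finset.sum_range_succ,
      Finset.sum_range_succ, ih]
    rw [if_pos (by omega : (4*m-1+1+1+1+1)%4 = 0 ∨ (4*m-1+1+1+1+1)%4 = 3),
      if_neg (by omega : ¬((4*m-1+1+1+1)%4 = 0 ∨ (4*m-1+1+1+1)%4 = 3)),
      if_neg (by omega : ¬((4*m-1+1+1)%4 = 0 ∨ (4*m-1+1+1)%4 = 3)),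
      if_pos (by omega : (4*m-1+1)%4 = 0 ∨ (4*m-1+1)%4 = 3)]
    push_cast
    ring

lemma wdsum (n : ℕ) (hn : 0 < n) :
    ∑ k : Fin (4*n+1), wd n (k:ℕ) = (4*(n:ℝ)+1) * (10*n+4) := by
  rw [Fin.sum_univ_eq_sum_range (fun k => wd n k) (4*n+1)]
  rw [Finset.sum_range_succ']
  rw [show 4*n = 4*n-1+1 by omega, Finset.sum_range_succ]
  have hint : ∀ i ∈ Finset.range (4*n-1), wd n (i+1)
      = (4*(n:ℝ)+1) * (if (i+1)%4 = 0 ∨ (i+1)%4 = 3 then 2 else 3) := by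
    intro i hi
    have := Finset.mem_range.mp hi
    unfold wd
    rw [if_neg (by omega)]
  rw [Finset.sum_congr rfl hint, ← Finset.mul_sum, usum n hn]
  have h0 : wd n 0 = (4*(n:ℝ)+1) * 3 := by unfold wd; rw [if_pos (Or.inl rfl)]
  have h4 : wd n (4*n) = (4*(n:ℝ)+1) * 3 := by unfold wd; rw [if_pos (Or.inr rfl)]
  rw [show 4*n-1+1 = 4*n by omega, h0, h4]
  push_cast
  ring

lemma traceTr (n : ℕ) :
    ∑ i : Fin (4*n+1), Tr n i i = (4*(n:ℝ)+1) * ((4*(n:ℝ)+1)^2 - 1) := by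
  rw [Fin.sum_univ_eq_sum_range (fun k => Tr n k k) (4*n+1)]
  have h2 := tracesum (4*n+1)
  have h3 := congrArg (fun z : ℤ => (z : ℝ)) h2
  push_cast at h3
  unfold Tr
  rw [← h3]
  push_cast
  rfl

lemma traceW (n : ℕ) (hn : 0 < n) :
    Matrix.trace (W n)
      = 2 * ((4*(n:ℝ)+1) * ((4*(n:ℝ)+1)^2 - 1) + (4*(n:ℝ)+1) * (10*n+4)) := by
  rw [Matrix.trace]
  rw [Fintype.sum_prod_type, Fin.sum_univ_two]
  have hd : ∀ (s : Fin 2) (i : Fin (4*n+1)), Matrix.diag (W n) (s, i) = Tr n i i + wd n i := by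
    intro s i
    simp [Matrix.diag, W, ee]
  simp only [hd]
  rw [Finset.sum_add_distrib, traceTr n, wdsum n hn]
  ring


open Matrix in
/-- The Kirchhoff index of `Q_n`, computed as `|V| = 8n+2` times the sum of reciprocals of the
nonzero Laplacian eigenvalues (reciprocals in `ℝ` with `0⁻¹ = 0`, and `Q_n` has exactly one
zero Laplacian eigenvalue), equals `(32n³+44n²+17n+2)/3`. -/
theorem kirchhoff_crossedOctQuad (n : ℕ) (hn : 0 < n)
    (h : ((crossedOctQuad n).lapMatrix ℝ).IsHermitian) :
    (8 * (n : ℝ) + 2) * ∑ i, (h.eigenvalues i)⁻¹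
      = (32 * (n : ℝ) ^ 3 + 44 * n ^ 2 + 17 * n + 2) / 3 := by
  haveI : Nonempty (Fin 2 × Fin (4*n+1)) := ⟨(0, ⟨0, by omega⟩)⟩
  have hm0 : (4*(n:ℝ)+1) ≠ 0 := by positivity
  have h24 : (24*(4*(n:ℝ)+1)) ≠ 0 := by positivity
  have h2m : (2*(4*(n:ℝ)+1)) ≠ 0 := by positivity
  have hcard : ((Fintype.card (Fin 2 × Fin (4*n+1)) : ℕ) : ℝ) = 2*(4*(n:ℝ)+1) := by
    simp only [Fintype.card_prod, Fintype.card_fin]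
    push_cast
    ring
  set M : Matrix (Fin 2 × Fin (4*n+1)) (Fin 2 × Fin (4*n+1)) ℝ
    := (24*(4*(n:ℝ)+1))⁻¹ • W n with hM
  have hML : M * (crossedOctQuad n).lapMatrix ℝ
      = 1 - ((Fintype.card (Fin 2 × Fin (4*n+1)) : ℝ))⁻¹ • Matrix.of (fun _ _ => (1:ℝ)) := by
    rw [hM, Matrix.smul_mul]
    ext p q
    rw [Matrix.smul_apply, WL_entry n hn p q, Matrix.sub_apply, Matrix.smul_apply,
      Matrix.one_apply, Matrix.of_apply, hcard]
    split_ifs <;> (simp only [smul_eq_mul, mul_one, mul_zero]; field_simp; ring)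
  have hM1 : M *ᵥ (fun _ => (1:ℝ)) = 0 := by
    rw [hM, Matrix.smul_mulVec, Wrow n, smul_zero]
  rw [sum_inv_eig (crossedOctQuad n) (precon n) h M hML hM1]
  rw [hM, Matrix.trace_smul, traceW n hn, smul_eq_mul]
  field_simp
  ring
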